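/- One-step contraction of the expected magnetization: for every β ≥ 0 and every n, the magnetization chain (S_t) satisfies: for any two states s ≥ s̃ in Ω_S, 0 ≤ E_s[S_1] − E_{s̃}[S_1] ≤ ρ(s − s̃); and for any two states s, s̃ in Ω_S, |E_s[S_1] − E_{s̃}[S_1]| ≤ ρ|s − s̃|, where ρ = 1 − n^{-1}(1 − n·tanh(β/n)). -/

import Mathlib

open Filter Real

namespace CW

noncomputable section

/-- `p₊(s) = (1 + tanh(βs))/2`. -/
def pPlus (β s : ℝ) : ℝ := (1 + Real.tanh (β * s)) / 2

/-- `p₋(s) = (1 - tanh(βs))/2`. -/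
def pMinus (β s : ℝ) : ℝ := (1 - Real.tanh (β * s)) / 2

/-- The value of the magnetization corresponding to `k` plus spins among `n`
sites: the state space `Ω_S = {-1, -1 + 2/n, …, 1 - 2/n, 1}` is indexed by
`k ∈ {0, 1, …, n}`, with `magVal n k = (2k - n)/n`. -/
def magVal (n : ℕ) (k : Fin (n + 1)) : ℝ := (2 * (k : ℕ) - n) / n

/-- Transition kernel of the magnetization chain of the Curie-Weiss Glauber
dynamics: from `s` move to `s - 2/n` with probability `((1+s)/2) p₋(s - 1/n)`,
to `s + 2/n` with probability `((1-s)/2) p₊(s + 1/n)`, and stay put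
otherwise. -/
def magKernel (β : ℝ) (n : ℕ) (k l : Fin (n + 1)) : ℝ :=
  if (l : ℕ) + 1 = (k : ℕ) then
    ((1 + magVal n k) / 2) * pMinus β (magVal n k - 1 / n)
  else if (k : ℕ) + 1 = (l : ℕ) then
    ((1 - magVal n k) / 2) * pPlus β (magVal n k + 1 / n)
  else if l = k then
    1 - ((1 + magVal n k) / 2) * pMinus β (magVal n k - 1 / n)
      - ((1 - magVal n k) / 2) * pPlus β (magVal n k + 1 / n)
  else 0

/-- One-step expected magnetization `E_s[S₁]` of the magnetization chain
started from the state `k`. -/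
def magE1 (β : ℝ) (n : ℕ) (k : Fin (n + 1)) : ℝ :=
  ∑ l, magKernel β n k l * magVal n l

lemma tanh_exp (x : ℝ) : Real.tanh x = (Real.exp x ^ 2 - 1) / (Real.exp x ^ 2 + 1) := by
  have h : Real.exp x ≠ 0 := (Real.exp_pos x).ne'
  have h2 : (0:ℝ) < Real.exp x ^ 2 + 1 := by positivity
  rw [Real.tanh_eq_sinh_div_cosh, Real.sinh_eq, Real.cosh_eq, Real.exp_neg]
  field_simp
  try ring

lemma tanh_key {a b : ℝ} (h : b ≤ a) :
    0 ≤ Real.tanh a - Real.tanh b ∧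
    Real.tanh a - Real.tanh b ≤ 2 * Real.tanh ((a - b) / 2) := by
  have hu : (0:ℝ) < Real.exp a := Real.exp_pos a
  have hv : (0:ℝ) < Real.exp b := Real.exp_pos b
  have huv : Real.exp b ≤ Real.exp a := Real.exp_le_exp.2 h
  set u := Real.exp a with hudef
  set v := Real.exp b with hvdef
  have hw : Real.exp ((a - b) / 2) ^ 2 = u / v := by
    rw [sq, ← Real.exp_add, show (a - b) / 2 + (a - b) / 2 = a - b from by ring,
      Real.exp_sub]
  rw [tanh_exp, tanh_exp, tanh_exp, hw]
  have h1 : (0:ℝ) < u ^ 2 + 1 := by positivity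
  have h2 : (0:ℝ) < v ^ 2 + 1 := by positivity
  constructor
  · rw [sub_nonneg, div_le_div_iff₀ h2 h1]; nlinarith
  · have hq : (u / v - 1) / (u / v + 1) = (u - v) / (u + v) := by
      rw [div_eq_div_iff (by positivity) (by positivity)]
      field_simp
    rw [hq, show 2 * ((u - v) / (u + v)) = (2 * (u - v)) / (u + v) from by ring,
      div_sub_div _ _ h1.ne' h2.ne', div_le_div_iff₀ (by positivity) (by positivity)]
    nlinarith [mul_nonneg (sub_nonneg.2 huv) (sq_nonneg (u * v - 1))]

lemma tanh_nonneg' {x : ℝ} (hx : 0 ≤ x) : 0 ≤ Real.tanh x := by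
  have := (tanh_key hx).1
  rwa [Real.tanh_zero, sub_zero] at this

def gfun (β : ℝ) (n : ℕ) (s : ℝ) : ℝ :=
  s + 2 / n * ((1 - s) / 2 * pPlus β (s + 1 / n) - (1 + s) / 2 * pMinus β (s - 1 / n))

def mvN (n j : ℕ) : ℝ := (2 * (j : ℝ) - n) / n

lemma magVal_eq_mvN (n : ℕ) (k : Fin (n + 1)) : magVal n k = mvN n (k : ℕ) := rfl

lemma magE1_eq (β : ℝ) {n : ℕ} (hn : 0 < n) (k : Fin (n + 1)) :
    magE1 β n k = gfun β n (magVal n k) := by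
  have hn0 : (n:ℝ) ≠ 0 := Nat.cast_ne_zero.2 hn.ne'
  have hkn : (k : ℕ) ≤ n := Nat.lt_succ_iff.1 k.isLt
  have expand : ∀ l : Fin (n + 1), magKernel β n k l * magVal n l =
      (if (l : ℕ) + 1 = (k : ℕ) then
        ((1 + magVal n k) / 2) * pMinus β (magVal n k - 1 / n) * magVal n l else 0) +
      (if (k : ℕ) + 1 = (l : ℕ) then
        ((1 - magVal n k) / 2) * pPlus β (magVal n k + 1 / n) * magVal n l else 0) +
      (if l = k then
        (1 - ((1 + magVal n k) / 2) * pMinus β (magVal n k - 1 / n)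
          - ((1 - magVal n k) / 2) * pPlus β (magVal n k + 1 / n)) * magVal n l else 0) := by
    intro l
    unfold magKernel
    simp only [Fin.ext_iff]
    split_ifs <;> first | (exfalso; omega) | ring
  unfold magE1
  rw [Finset.sum_congr rfl (fun l _ => expand l), Finset.sum_add_distrib,
    Finset.sum_add_distrib]
  have S3 : (∑ l : Fin (n+1), if l = k then
      (1 - ((1 + magVal n k) / 2) * pMinus β (magVal n k - 1 / n)
        - ((1 - magVal n k) / 2) * pPlus β (magVal n k + 1 / n)) * magVal n l else 0)
      = (1 - ((1 + magVal n k) / 2) * pMinus β (magVal n k - 1 / n)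
        - ((1 - magVal n k) / 2) * pPlus β (magVal n k + 1 / n)) * magVal n k := by
    rw [Finset.sum_ite_eq' Finset.univ k]
    simp
  rw [S3]
  rcases Nat.eq_zero_or_pos (k : ℕ) with hk0 | hkpos
  · -- k = 0 case : A = 0, first sum = 0, k < n so second sum at k+1
    have hs : magVal n k = -1 := by
      unfold magVal; rw [hk0]; push_cast; field_simp; ring
    have S1 : (∑ l : Fin (n+1), if (l : ℕ) + 1 = (k : ℕ) then
        ((1 + magVal n k) / 2) * pMinus β (magVal n k - 1 / n) * magVal n l else 0) = 0 := by
      apply Finset.sum_eq_zero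
      intro l _
      rw [if_neg]
      omega
    have hkltn : (k : ℕ) + 1 ≤ n := by omega
    have S2 : (∑ l : Fin (n+1), if (k : ℕ) + 1 = (l : ℕ) then
        ((1 - magVal n k) / 2) * pPlus β (magVal n k + 1 / n) * magVal n l else 0)
        = ((1 - magVal n k) / 2) * pPlus β (magVal n k + 1 / n) * (magVal n k + 2 / n) := by
      rw [Fintype.sum_eq_single (⟨(k : ℕ) + 1, by omega⟩ : Fin (n + 1))]
      · rw [if_pos rfl]
        congr 1
        unfold magVal
        push_cast
        field_simp
        ring
      · intro l hl
        rw [if_neg]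
        intro hc
        exact hl (Fin.ext (by simp only [Fin.val_mk]; omega))
    rw [S1, S2]
    unfold gfun
    rw [hs]
    norm_num
    ring
  · obtain ⟨j, hj⟩ : ∃ j, (k : ℕ) = j + 1 := ⟨(k : ℕ) - 1, by omega⟩
    have S1 : (∑ l : Fin (n+1), if (l : ℕ) + 1 = (k : ℕ) then
        ((1 + magVal n k) / 2) * pMinus β (magVal n k - 1 / n) * magVal n l else 0)
        = ((1 + magVal n k) / 2) * pMinus β (magVal n k - 1 / n) * (magVal n k - 2 / n) := by
      rw [Fintype.sum_eq_single (⟨j, by omega⟩ : Fin (n + 1))]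
      · rw [if_pos (by simp [hj])]
        congr 1
        unfold magVal
        simp only [Fin.val_mk]
        rw [hj]
        push_cast
        field_simp
        ring
      · intro l hl
        rw [if_neg]
        intro hc
        exact hl (Fin.ext (by simp only [Fin.val_mk]; omega))
    rw [S1]
    rcases Nat.lt_or_ge (k : ℕ) n with hklt | hke
    · have S2 : (∑ l : Fin (n+1), if (k : ℕ) + 1 = (l : ℕ) then
          ((1 - magVal n k) / 2) * pPlus β (magVal n k + 1 / n) * magVal n l else 0)
          = ((1 - magVal n k) / 2) * pPlus β (magVal n k + 1 / n) * (magVal n k + 2 / n) := by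
        rw [Fintype.sum_eq_single (⟨(k : ℕ) + 1, by omega⟩ : Fin (n + 1))]
        · rw [if_pos rfl]
          congr 1
          unfold magVal
          push_cast
          field_simp
          ring
        · intro l hl
          rw [if_neg]
          intro hc
          exact hl (Fin.ext (by simp only [Fin.val_mk]; omega))
      rw [S2]
      unfold gfun
      ring
    · have hkn' : (k : ℕ) = n := le_antisymm hkn hke
      have hs : magVal n k = 1 := by
        unfold magVal; rw [hkn']; field_simp; ring
      have S2 : (∑ l : Fin (n+1), if (k : ℕ) + 1 = (l : ℕ) then
          ((1 - magVal n k) / 2) * pPlus β (magVal n k + 1 / n) * magVal n l else 0) = 0 := by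
        apply Finset.sum_eq_zero
        intro l _
        rw [if_neg]
        have := l.isLt
        omega
      rw [S2]
      unfold gfun
      rw [hs]
      norm_num
      ring

lemma step (β : ℝ) (hβ : 0 ≤ β) (n : ℕ) (hn : 1 ≤ n) (s : ℝ)
    (hs1 : s ≤ 1) (hs2 : -1 ≤ s - 2 / (n : ℝ)) :
    0 ≤ gfun β n s - gfun β n (s - 2 / n) ∧
    gfun β n s - gfun β n (s - 2 / n) ≤
      (1 - 1 / (n : ℝ) + Real.tanh (β / n)) * (2 / n) := by
  have hn0 : (0:ℝ) < n := by exact_mod_cast hn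
  have hd0 : (0:ℝ) < 2 / n := by positivity
  have hd2 : (2:ℝ) / n ≤ 2 := by
    rw [div_le_iff₀ hn0]
    nlinarith [show (1:ℝ) ≤ n from by exact_mod_cast hn]
  have harg1 : s - 1 / (n:ℝ) ≤ s + 1 / n := by
    have : (0:ℝ) < 1/n := by positivity
    linarith
  have harg2 : s - 3 / (n:ℝ) ≤ s - 1 / n := by
    have h1 : (0:ℝ) < 1/n := by positivity
    have h3 : (3:ℝ)/n = 3*(1/n) := by ring
    rw [h3]; linarith
  obtain ⟨h12, h12'⟩ := tanh_key (a := β * (s + 1 / n)) (b := β * (s - 1 / n))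
    (mul_le_mul_of_nonneg_left harg1 hβ)
  obtain ⟨h23, h23'⟩ := tanh_key (a := β * (s - 1 / n)) (b := β * (s - 3 / n))
    (mul_le_mul_of_nonneg_left harg2 hβ)
  rw [show (β * (s + 1 / n) - β * (s - 1 / n)) / 2 = β / n from by field_simp; ring] at h12'
  rw [show (β * (s - 1 / n) - β * (s - 3 / n)) / 2 = β / n from by field_simp; ring] at h23'
  have ht0 : 0 ≤ Real.tanh (β / n) := tanh_nonneg' (by positivity)
  have hid : gfun β n s - gfun β n (s - 2 / n) =
      2 / n * (1 - (2 / n) / 2) + (2 / n) / 4 *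
        ((1 - s) * (Real.tanh (β * (s + 1 / n)) - Real.tanh (β * (s - 1 / n)))
          + (1 + (s - 2 / n)) *
            (Real.tanh (β * (s - 1 / n)) - Real.tanh (β * (s - 3 / n)))) := by
    unfold gfun pPlus pMinus
    rw [show β * (s - 2 / (n:ℝ) + 1 / n) = β * (s - 1 / n) from by ring,
        show β * (s - 2 / (n:ℝ) - 1 / n) = β * (s - 3 / n) from by ring]
    field_simp
    ring
  have hrho : (1 - 1 / (n : ℝ) + Real.tanh (β / n)) * (2 / n)
      = (1 - (2/n)/2 + Real.tanh (β / n)) * (2 / n) := by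
    congr 2
    ring
  rw [hid, hrho]
  set d := (2:ℝ) / n with hd
  set T1 := Real.tanh (β * (s + 1 / n))
  set T2 := Real.tanh (β * (s - 1 / n))
  set T3 := Real.tanh (β * (s - 3 / n))
  set t := Real.tanh (β / n)
  have a1 : (0:ℝ) ≤ 1 - s := by linarith
  have a2 : (0:ℝ) ≤ 1 + (s - d) := by linarith
  constructor
  · nlinarith [mul_nonneg (mul_nonneg hd0.le a1) h12,
      mul_nonneg (mul_nonneg hd0.le a2) h23,
      mul_nonneg hd0.le (show (0:ℝ) ≤ 2 - d from by linarith)]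
  · nlinarith [mul_nonneg (mul_nonneg hd0.le a1) (show (0:ℝ) ≤ 2*t - (T1 - T2) from by linarith),
      mul_nonneg (mul_nonneg hd0.le a2) (show (0:ℝ) ≤ 2*t - (T2 - T3) from by linarith),
      mul_nonneg (mul_nonneg hd0.le hd0.le) ht0]

lemma telescope (β : ℝ) (hβ : 0 ≤ β) {n : ℕ} (hn : 1 ≤ n) :
    ∀ m j : ℕ, j + m ≤ n →
      0 ≤ gfun β n (mvN n (j + m)) - gfun β n (mvN n j) ∧
      gfun β n (mvN n (j + m)) - gfun β n (mvN n j) ≤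
        (1 - 1 / (n : ℝ) + Real.tanh (β / n)) * (mvN n (j + m) - mvN n j) := by
  have hn0 : (0:ℝ) < n := by exact_mod_cast hn
  intro m
  induction m with
  | zero => intro j _; simp
  | succ m ih =>
    intro j h
    have e : j + (m + 1) = (j + m) + 1 := by omega
    rw [e] at h ⊢
    obtain ⟨ih1, ih2⟩ := ih j (by omega)
    have hprev : mvN n (j + m) = mvN n (j + m + 1) - 2 / n := by
      unfold mvN; push_cast; field_simp; ring
    have hle1 : mvN n (j + m + 1) ≤ 1 := by
      unfold mvN
      rw [div_le_one hn0]
      have : ((j:ℝ) + m + 1) ≤ n := by exact_mod_cast h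
      push_cast
      linarith
    have hge : -1 ≤ mvN n (j + m + 1) - 2 / n := by
      rw [← hprev]
      unfold mvN
      rw [le_div_iff₀ hn0]
      push_cast
      nlinarith [show (0:ℝ) ≤ (j:ℝ) + m from by positivity]
    obtain ⟨s1, s2⟩ := step β hβ n hn (mvN n (j + m + 1)) hle1 hge
    rw [← hprev] at s1 s2
    have hmul : (1 - 1 / (n : ℝ) + Real.tanh (β / n)) * (mvN n (j + m + 1) - mvN n j)
        = (1 - 1 / (n : ℝ) + Real.tanh (β / n)) * (2 / n)
          + (1 - 1 / (n : ℝ) + Real.tanh (β / n)) * (mvN n (j + m) - mvN n j) := by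
      rw [hprev]; ring
    constructor
    · linarith
    · rw [hmul]; linarith


/-- One-step contraction of the expected magnetization: for all `β ≥ 0` and
all `n`, if `s ≥ s̃` then `0 ≤ E_s[S₁] - E_s̃[S₁] ≤ ρ (s - s̃)`, and for all
`s, s̃`, `|E_s[S₁] - E_s̃[S₁]| ≤ ρ |s - s̃|`, where
`ρ = 1 - n⁻¹(1 - n tanh(β/n))`. -/
theorem mag_chain_contraction (β : ℝ) (hβ : 0 ≤ β) (n : ℕ) :
    (∀ k k' : Fin (n + 1), magVal n k' ≤ magVal n k →
      0 ≤ magE1 β n k - magE1 β n k' ∧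
      magE1 β n k - magE1 β n k' ≤
        (1 - (1 / (n : ℝ)) * (1 - n * Real.tanh (β / n))) *
          (magVal n k - magVal n k')) ∧
    (∀ k k' : Fin (n + 1),
      |magE1 β n k - magE1 β n k'| ≤
        (1 - (1 / (n : ℝ)) * (1 - n * Real.tanh (β / n))) *
          |magVal n k - magVal n k'|) := by
  rcases Nat.eq_zero_or_pos n with hn | hn
  · subst hn
    constructor
    · intro k k' _
      have hk : k' = k := Fin.ext (by omega)
      subst hk
      simp
    · intro k k'
      have hk : k' = k := Fin.ext (by omega)
      subst hk
      simp
  · have hn0 : (0:ℝ) < n := by exact_mod_cast hn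
    have hρ : (1 - (1 / (n:ℝ)) * (1 - n * Real.tanh (β / n)))
        = 1 - 1 / (n:ℝ) + Real.tanh (β / n) := by
      field_simp
      ring
    have hmono : ∀ k k' : Fin (n + 1), magVal n k' ≤ magVal n k → (k' : ℕ) ≤ (k : ℕ) := by
      intro k k' h
      unfold magVal at h
      rw [div_le_div_iff₀ hn0 hn0] at h
      have : ((k' : ℕ) : ℝ) ≤ ((k : ℕ) : ℝ) := by nlinarith
      exact_mod_cast this
    have key : ∀ k k' : Fin (n + 1), (k' : ℕ) ≤ (k : ℕ) →
        0 ≤ magE1 β n k - magE1 β n k' ∧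
        magE1 β n k - magE1 β n k' ≤
          (1 - 1 / (n:ℝ) + Real.tanh (β / n)) * (magVal n k - magVal n k') := by
      intro k k' hkk
      have hkn : (k : ℕ) ≤ n := Nat.lt_succ_iff.1 k.isLt
      have h1 := telescope β hβ hn ((k : ℕ) - (k' : ℕ)) (k' : ℕ) (by omega)
      rw [show (k' : ℕ) + ((k : ℕ) - (k' : ℕ)) = (k : ℕ) from by omega] at h1
      rw [magE1_eq β hn k, magE1_eq β hn k', magVal_eq_mvN, magVal_eq_mvN]
      exact h1
    constructor
    · intro k k' h
      rw [hρ]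
      exact key k k' (hmono k k' h)
    · intro k k'
      rw [hρ]
      rcases le_total (magVal n k') (magVal n k) with h | h
      · obtain ⟨h1, h2⟩ := key k k' (hmono k k' h)
        rw [abs_of_nonneg h1, abs_of_nonneg (sub_nonneg.2 h)]
        exact h2
      · obtain ⟨h1, h2⟩ := key k' k (hmono k' k h)
        rw [abs_sub_comm, abs_of_nonneg h1, abs_sub_comm (magVal n k),
          abs_of_nonneg (sub_nonneg.2 h)]
        exact h2

end

end CW
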